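/- For all α, β in I^cf_λ, the product satisfies d̄(αβ) − r̄(αβ) = (d̄(α) − r̄(α)) + (d̄(β) − r̄(β)), where the differences are taken in the integers. -/

import Mathlib

open Function Set

namespace IcfPaper

variable {ι : Type*}

lemma trans_none_finite {f g : ι ≃. ι}
    (hf : {a | f a = none}.Finite) (hg : {b | g b = none}.Finite) :
    {a | (f.trans g) a = none}.Finite := by
  have hsub : {a | (f.trans g) a = none} ⊆
      {a | f a = none} ∪ ⋃ b ∈ {b | g b = none}, {a | f.symm b = some a} := by
    intro a ha
    simp only [Set.mem_setOf_eq] at ha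
    rcases hfa : f a with _ | b
    · exact Or.inl hfa
    · have hg' : g b = none := by
        have : (f.trans g) a = (f a).bind g := rfl
        rw [this, hfa, Option.bind_some] at ha
        exact ha
      refine Or.inr ?_
      refine Set.mem_biUnion hg' ?_
      exact (PEquiv.eq_some_iff f).2 hfa
  refine Set.Finite.subset (hf.union (hg.biUnion ?_)) hsub
  intro b _
  apply Set.Subsingleton.finite
  intro a1 h1 a2 h2
  simp only [Set.mem_setOf_eq] at h1 h2
  rw [h1] at h2
  exact Option.some_injective _ h2

/-- The monoid of injective partial selfmaps of `ι` with cofinite domain and range. -/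
def Icf (ι : Type*) : Type _ :=
  {f : ι ≃. ι // {a | f a = none}.Finite ∧ {b | f.symm b = none}.Finite}

namespace Icf

instance : Monoid (Icf ι) where
  mul f g := ⟨f.1.trans g.1, trans_none_finite f.2.1 g.2.1, by
      rw [PEquiv.symm_trans_rev]
      exact trans_none_finite g.2.2 f.2.2⟩
  one := ⟨PEquiv.refl ι, by
      constructor <;>
      · convert Set.finite_empty
        ext a
        simp only [Set.mem_setOf_eq, Set.mem_empty_iff_false, iff_false]
        intro h
        exact Option.some_ne_none a h⟩
  mul_assoc a b c := Subtype.ext (PEquiv.trans_assoc _ _ _)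
  one_mul a := Subtype.ext (PEquiv.refl_trans _)
  mul_one a := Subtype.ext (PEquiv.trans_refl _)

/-- The domain of an element of `Icf ι`. -/
def dom (f : Icf ι) : Set ι := {a | (f.1 a).isSome}

/-- The range of an element of `Icf ι`. -/
def ran (f : Icf ι) : Set ι := {b | (f.1.symm b).isSome}

/-- `d̄ f`, the number of points of `ι` outside of the domain of `f`. -/
noncomputable def dbar (f : Icf ι) : ℕ := (dom f)ᶜ.ncard

/-- `r̄ f`, the number of points of `ι` outside of the range of `f`. -/
noncomputable def rbar (f : Icf ι) : ℕ := (ran f)ᶜ.ncard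

end Icf

/-- The bicyclic semigroup `⟨p, q | pq = 1⟩`, realized as `ℕ × ℕ` with the operation
`(a,b)(c,d) = (a - b + max(b,c), d - c + max(b,c))`. -/
def Bicyclic : Type := ℕ × ℕ

instance : Mul Bicyclic :=
  ⟨fun x y => (x.1 - x.2 + max x.2 y.1, y.2 - y.1 + max x.2 y.1)⟩



lemma trans_none_eq (f g : ι ≃. ι) :
    {a | (f.trans g) a = none} =
      {a | f a = none} ∪ {a | ∃ b, f a = some b ∧ g b = none} := by
  ext a
  have ht : (f.trans g) a = (f a).bind g := rfl
  simp only [Set.mem_setOf_eq, Set.mem_union, ht]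
  rcases hfa : f a with _ | b
  · simp
  · simp [hfa]

lemma bijOn_getD (f g : ι ≃. ι) :
    Set.BijOn (fun a => (f a).getD a) {a | ∃ b, f a = some b ∧ g b = none}
      ({b | g b = none} ∩ {b | (f.symm b).isSome}) := by
  refine ⟨?_, ?_, ?_⟩
  · rintro a ⟨b, hfa, hgb⟩
    simp only [hfa, Option.getD_some, Set.mem_inter_iff, Set.mem_setOf_eq]
    exact ⟨hgb, by rw [f.eq_some_iff.mpr hfa]; rfl⟩
  · rintro a1 ⟨b1, h1, _⟩ a2 ⟨b2, h2, _⟩ he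
    simp only [h1, h2, Option.getD_some] at he
    subst he
    have e1 := f.eq_some_iff.mpr h1
    have e2 := f.eq_some_iff.mpr h2
    rw [e1] at e2
    exact Option.some_injective _ e2
  · rintro b ⟨hgb, hb⟩
    obtain ⟨a, ha⟩ := Option.isSome_iff_exists.mp hb
    have hfa : f a = some b := f.eq_some_iff.mp ha
    exact ⟨a, ⟨b, hfa, hgb⟩, by simp [hfa]⟩

lemma key (f g : ι ≃. ι) (hf : {a | f a = none}.Finite)
    (hT : ({b | g b = none} ∩ {b | (f.symm b).isSome}).Finite) :
    {a | (f.trans g) a = none}.ncard =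
      {a | f a = none}.ncard + ({b | g b = none} ∩ {b | (f.symm b).isSome}).ncard := by
  have hb := bijOn_getD f g
  have hS : {a | ∃ b, f a = some b ∧ g b = none}.Finite :=
    Set.Finite.of_finite_image (hb.image_eq ▸ hT) hb.injOn
  rw [trans_none_eq, Set.ncard_union_eq ?_ hf hS, ← hb.image_eq,
    Set.ncard_image_of_injOn hb.injOn]
  rw [Set.disjoint_left]
  rintro a ha ⟨b, hfa, _⟩
  rw [Set.mem_setOf_eq, hfa] at ha
  exact Option.some_ne_none b ha

lemma split (A B : Set ι) (hA : A.Finite) :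
    A.ncard = (A ∩ B).ncard + (A \ B).ncard :=
  (Set.ncard_inter_add_ncard_diff_eq_ncard A B hA).symm


lemma dom_compl (f : Icf ι) : (Icf.dom f)ᶜ = {a | f.1 a = none} := by
  ext a
  simp [Icf.dom, Option.not_isSome_iff_eq_none]

lemma ran_compl (f : Icf ι) : (Icf.ran f)ᶜ = {b | f.1.symm b = none} := by
  ext b
  simp [Icf.ran, Option.not_isSome_iff_eq_none]

/-- `d̄(αβ) − r̄(αβ) = (d̄(α) − r̄(α)) + (d̄(β) − r̄(β))` in the integers. -/
theorem statement15 {ι : Type*} [Infinite ι] (α β : Icf ι) :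
    (Icf.dbar (α * β) : ℤ) - (Icf.rbar (α * β) : ℤ) =
      ((Icf.dbar α : ℤ) - (Icf.rbar α : ℤ)) + ((Icf.dbar β : ℤ) - (Icf.rbar β : ℤ)) := by
  set X := {a | α.1.symm a = none} with hX
  set Y := {a | β.1 a = none} with hY
  have hXfin : X.Finite := α.2.2
  have hYfin : Y.Finite := β.2.1
  have hmul1 : (α * β).1 = α.1.trans β.1 := rfl
  have hmul2 : (α * β).1.symm = β.1.symm.trans α.1.symm := by
    rw [hmul1, PEquiv.symm_trans_rev]
  have hd : Icf.dbar (α * β) = Icf.dbar α + (Y \ X).ncard := by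
    unfold Icf.dbar
    rw [dom_compl, dom_compl, hmul1,
      key α.1 β.1 α.2.1 (hYfin.inter_of_left _)]
    congr 2
    ext b
    simp [hX, hY, Option.isSome_iff_ne_none]
  have hr : Icf.rbar (α * β) = Icf.rbar β + (X \ Y).ncard := by
    unfold Icf.rbar
    rw [ran_compl, ran_compl, hmul2,
      key β.1.symm α.1.symm β.2.2 (by simpa using hXfin.inter_of_left _)]
    congr 2
    ext b
    simp [hX, hY, Option.isSome_iff_ne_none]
  have hdb : Icf.dbar β = (Y ∩ X).ncard + (Y \ X).ncard := by
    unfold Icf.dbar; rw [dom_compl]; exact split Y X hYfin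
  have hra : Icf.rbar α = (Y ∩ X).ncard + (X \ Y).ncard := by
    unfold Icf.rbar; rw [ran_compl, Set.inter_comm]; exact split X Y hXfin
  rw [hd, hr, hdb, hra]
  push_cast
  ring

end IcfPaper
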